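/- arXiv:2512.08966 — 4 statements merged into one kernel-verified Lean document; each statement's English description precedes it below -/
import Mathlib

section
/- Let (λ_j)_{j≥1} be a nondecreasing sequence of positive real numbers tending to infinity, and let R(Λ) := Σ_{j≥1} (Λ − λ_j)_+ be its Riesz mean. Then for every integer k ≥ 1, the Cesàro average satisfies (1/k) Σ_{j=1}^k λ_j = sup_{Λ>0} ( Λ − R(Λ)/k ). -/
open scoped BigOperators

/-- The (order-1) Riesz mean of a sequence `λ_j = f j` (indices `j ≥ 1`):
`R(Λ) = Σ_{j≥1} (Λ − λ_j)_+`. -/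
noncomputable def RieszMean (f : ℕ → ℝ) (Λ : ℝ) : ℝ :=
  ∑' j : ℕ, max (Λ - f (j + 1)) 0

/-- The Cesàro average `A(k) = (1/k) Σ_{j=1}^k λ_j`. -/
noncomputable def CesaroAvg (f : ℕ → ℝ) (k : ℕ) : ℝ :=
  (∑ j ∈ Finset.Icc 1 k, f j) / k

/-- The counting function `N(τ) = #{ j ≥ 1 : λ_j < τ }`. -/
noncomputable def Counting (f : ℕ → ℝ) (τ : ℝ) : ℕ :=
  Nat.card {j : ℕ // 1 ≤ j ∧ f j < τ}

/-- Variational representation of Cesàro means: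
`(1/k) Σ_{j=1}^k λ_j = sup_{Λ>0} (Λ − R(Λ)/k)`. -/
theorem cesaro_eq_sup_riesz (f : ℕ → ℝ)
    (hpos : ∀ j, 0 < f j) (hmono : Monotone f)
    (htend : Filter.Tendsto f Filter.atTop Filter.atTop)
    (k : ℕ) (hk : 1 ≤ k) :
    CesaroAvg f k = sSup ((fun Λ : ℝ => Λ - RieszMean f Λ / k) '' Set.Ioi 0) := by
  have hk0 : (0:ℝ) < k := by exact_mod_cast hk
  set S : ℝ := ∑ j ∈ Finset.Icc 1 k, f j with hS
  have hreidx : S = ∑ j ∈ Finset.range k, f (j + 1) := by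
    rw [hS, show Finset.Icc 1 k = Finset.Ico 1 (k+1) by rw [Finset.Ico_add_one_right_eq_Icc],
      Finset.sum_Ico_eq_sum_range]
    simp [add_comm]
  -- summability
  have hsumm : ∀ Λ : ℝ, Summable (fun j : ℕ => max (Λ - f (j + 1)) 0) := by
    intro Λ
    obtain ⟨N, hN⟩ := Filter.eventually_atTop.mp (htend.eventually_ge_atTop Λ)
    apply summable_of_ne_finset_zero (s := Finset.range N)
    intro j hj
    simp only [Finset.mem_range, not_lt] at hj
    have : Λ ≤ f (j+1) := hN _ (le_trans hj (Nat.le_succ _))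
    simp [max_eq_right, sub_nonpos.mpr this]
  -- upper bound
  have hub : ∀ Λ : ℝ, Λ - RieszMean f Λ / k ≤ CesaroAvg f k := by
    intro Λ
    have h1 : ∑ j ∈ Finset.range k, (Λ - f (j+1)) ≤ RieszMean f Λ := by
      calc ∑ j ∈ Finset.range k, (Λ - f (j+1))
          ≤ ∑ j ∈ Finset.range k, max (Λ - f (j+1)) 0 :=
            Finset.sum_le_sum fun j _ => le_max_left _ _
        _ ≤ RieszMean f Λ := Summable.sum_le_tsum _ (fun j _ => le_max_right _ _) (hsumm Λ)
    have h2 : ∑ j ∈ Finset.range k, (Λ - f (j+1)) = k * Λ - S := by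
      rw [Finset.sum_sub_distrib, Finset.sum_const, Finset.card_range, hreidx,
        nsmul_eq_mul]
    rw [h2] at h1
    show Λ - RieszMean f Λ / ↑k ≤ S / ↑k
    have h3 : (↑k * Λ - S) / ↑k ≤ RieszMean f Λ / ↑k := by gcongr
    rw [sub_div, mul_div_cancel_left₀ _ (ne_of_gt hk0)] at h3
    linarith
  -- attained at Λ₀ = f (k+1)
  set Λ₀ : ℝ := f (k+1) with hΛ₀
  have hΛ₀pos : 0 < Λ₀ := hpos _
  have hR : RieszMean f Λ₀ = ↑k * Λ₀ - S := by
    rw [RieszMean]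
    rw [tsum_eq_sum (s := Finset.range k) (by
      intro j hj
      simp only [Finset.mem_range, not_lt] at hj
      have : Λ₀ ≤ f (j+1) := hmono (by omega)
      simp [max_eq_right, sub_nonpos.mpr this])]
    rw [Finset.sum_congr rfl (fun j hj => by
      simp only [Finset.mem_range] at hj
      have : f (j+1) ≤ Λ₀ := hmono (by omega)
      exact max_eq_left (sub_nonneg.mpr this))]
    rw [Finset.sum_sub_distrib, Finset.sum_const, Finset.card_range, hreidx, nsmul_eq_mul]
  have hmem : CesaroAvg f k = Λ₀ - RieszMean f Λ₀ / k := by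
    rw [hR, CesaroAvg, ← hS]
    field_simp
    ring
  apply le_antisymm
  · rw [hmem]
    exact le_csSup ⟨CesaroAvg f k, fun x ⟨Λ, _, hx⟩ => hx ▸ hub Λ⟩
      ⟨Λ₀, hΛ₀pos, rfl⟩
  · exact csSup_le ⟨_, ⟨Λ₀, hΛ₀pos, rfl⟩⟩ fun x ⟨Λ, _, hx⟩ => hx ▸ hub Λ
end

section
/- Let (λ_j)_{j≥1} be a nondecreasing sequence of positive real numbers tending to infinity, let k ≥ 1 be an integer, and set Φ(Λ) := Λ − R(Λ)/k where R(Λ) := Σ_{j≥1} (Λ − λ_j)_+. Then every Λ* in the interval [λ_k, λ_{k+1}) is a global maximizer of Φ on (0,∞): for every Λ > 0, Φ(Λ) ≤ Φ(Λ*). -/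
open scoped BigOperators

lemma summable_riesz (f : ℕ → ℝ) (hmono : Monotone f)
    (htend : Filter.Tendsto f Filter.atTop Filter.atTop) (Λ : ℝ) :
    Summable (fun j : ℕ => max (Λ - f (j + 1)) 0) := by
  obtain ⟨N, hN⟩ := (Filter.tendsto_atTop.mp htend Λ).exists_forall_of_atTop
  apply summable_of_ne_finset_zero (s := Finset.range N)
  intro j hj
  simp only [Finset.mem_range, not_lt] at hj
  have : Λ ≤ f (j + 1) := le_trans (hN N le_rfl) (hmono (by omega))
  simp [max_eq_right, sub_nonpos.mpr this]

/-- Every `Λ* ∈ [λ_k, λ_{k+1})` globally maximizes `Φ(Λ) = Λ − R(Λ)/k`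
on `(0,∞)`. -/
theorem phi_global_max (f : ℕ → ℝ)
    (hpos : ∀ j, 0 < f j) (hmono : Monotone f)
    (htend : Filter.Tendsto f Filter.atTop Filter.atTop)
    (k : ℕ) (hk : 1 ≤ k) (Λstar : ℝ)
    (h₁ : f k ≤ Λstar) (h₂ : Λstar < f (k + 1)) :
    ∀ Λ : ℝ, 0 < Λ →
      Λ - RieszMean f Λ / k ≤ Λstar - RieszMean f Λstar / k := by
  intro Λ hΛ
  have hsΛ := summable_riesz f hmono htend Λ
  have hsΛs := summable_riesz f hmono htend Λstar
  have hsind : Summable (fun j : ℕ => if j < k then Λ - Λstar else 0) := by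
    apply summable_of_ne_finset_zero (s := Finset.range k)
    intro j hj
    simp only [Finset.mem_range, not_lt] at hj
    simp [Nat.not_lt.mpr hj]
  -- key pointwise inequality
  have hpt : ∀ j : ℕ, max (Λstar - f (j + 1)) 0 + (if j < k then Λ - Λstar else 0)
      ≤ max (Λ - f (j + 1)) 0 := by
    intro j
    by_cases hj : j < k
    · have hfj : f (j + 1) ≤ Λstar := le_trans (hmono (by omega)) h₁
      have : max (Λstar - f (j + 1)) 0 = Λstar - f (j + 1) :=
        max_eq_left (by linarith)
      rw [this]
      simp only [hj, if_true]
      have : Λ - f (j + 1) ≤ max (Λ - f (j + 1)) 0 := le_max_left _ _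
      linarith
    · have hfj : Λstar ≤ f (j + 1) := le_trans h₂.le (hmono (by omega))
      have : max (Λstar - f (j + 1)) 0 = 0 := max_eq_right (by linarith)
      rw [this]
      simp [hj, le_max_right]
  have hkey : RieszMean f Λstar + (k : ℝ) * (Λ - Λstar) ≤ RieszMean f Λ := by
    have hsum : ∑' j : ℕ, (max (Λstar - f (j + 1)) 0 + (if j < k then Λ - Λstar else 0))
        ≤ ∑' j : ℕ, max (Λ - f (j + 1)) 0 :=
      Summable.tsum_le_tsum hpt (hsΛs.add hsind) hsΛ
    rw [Summable.tsum_add hsΛs hsind] at hsum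
    have hind : ∑' j : ℕ, (if j < k then Λ - Λstar else 0) = (k : ℝ) * (Λ - Λstar) := by
      rw [tsum_eq_sum (s := Finset.range k) (by intro j hj; simp only [Finset.mem_range, not_lt] at hj; simp [Nat.not_lt.mpr hj])]
      simp [Finset.sum_ite_of_true, mul_comm]
      ring
    rw [hind] at hsum
    exact hsum
  have hkpos : (0 : ℝ) < k := by exact_mod_cast hk
  have h := div_le_div_of_nonneg_right (c := (k:ℝ)) hkey hkpos.le
  rw [add_div, mul_comm, mul_div_assoc, div_self (ne_of_gt hkpos), mul_one] at h
  linarith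
end

section
/- Let (a_j)_{j≥1} and (b_j)_{j≥1} be two nondecreasing sequences of positive real numbers tending to infinity, with Riesz means R_a(Λ) := Σ_{j≥1} (Λ − a_j)_+ and R_b(Λ) := Σ_{j≥1} (Λ − b_j)_+. If R_a(Λ) ≤ R_b(Λ) for every Λ > 0, then for every integer k ≥ 1 the Cesàro averages satisfy (1/k) Σ_{j=1}^k a_j ≥ (1/k) Σ_{j=1}^k b_j. -/
open scoped BigOperators

private lemma riesz_summable (f : ℕ → ℝ)
    (hf : Filter.Tendsto f Filter.atTop Filter.atTop) (Λ : ℝ) :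
    Summable (fun j : ℕ => max (Λ - f (j + 1)) 0) := by
  obtain ⟨N, hN⟩ := (hf.eventually_ge_atTop Λ).exists_forall_of_atTop
  apply summable_of_ne_finset_zero (s := Finset.range N)
  intro j hj
  simp only [Finset.mem_range, not_lt] at hj
  have : Λ ≤ f (j + 1) := hN (j + 1) (by omega)
  simp [max_eq_right, sub_nonpos.mpr this]

private lemma icc_sum (f : ℕ → ℝ) (k : ℕ) :
    ∑ j ∈ Finset.Icc 1 k, f j = ∑ j ∈ Finset.range k, f (j + 1) := by
  induction k with
  | zero => simp
  | succ n ih => rw [Finset.sum_Icc_succ_top (by omega), ih, Finset.sum_range_succ]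

/-- Abstract Cesàro–Pólya inequality: an ordering of Riesz means for all
energies implies the reverse ordering of Cesàro averages. -/
theorem cesaro_polya (a b : ℕ → ℝ)
    (hapos : ∀ j, 0 < a j) (hamono : Monotone a)
    (hatend : Filter.Tendsto a Filter.atTop Filter.atTop)
    (hbpos : ∀ j, 0 < b j) (hbmono : Monotone b)
    (hbtend : Filter.Tendsto b Filter.atTop Filter.atTop)
    (hR : ∀ Λ : ℝ, 0 < Λ → RieszMean a Λ ≤ RieszMean b Λ) :
    ∀ k : ℕ, 1 ≤ k → CesaroAvg b k ≤ CesaroAvg a k := by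
  intro k hk
  set Λ := b (k + 1) with hΛdef
  have hΛpos : 0 < Λ := hbpos _
  -- compute RieszMean b Λ exactly
  have hbR : RieszMean b Λ = k * Λ - ∑ j ∈ Finset.Icc 1 k, b j := by
    unfold RieszMean
    rw [tsum_eq_sum (s := Finset.range k)]
    · have h1 : ∀ j ∈ Finset.range k, max (Λ - b (j + 1)) 0 = Λ - b (j + 1) := by
        intro j hj
        simp only [Finset.mem_range] at hj
        exact max_eq_left (sub_nonneg.mpr (hbmono (by omega)))
      rw [Finset.sum_congr rfl h1, Finset.sum_sub_distrib, Finset.sum_const,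
        Finset.card_range, icc_sum, nsmul_eq_mul]
    · intro j hj
      simp only [Finset.mem_range, not_lt] at hj
      have : Λ ≤ b (j + 1) := hbmono (by omega)
      simp [max_eq_right, sub_nonpos.mpr this]
  -- lower bound for RieszMean a Λ
  have haR : k * Λ - ∑ j ∈ Finset.Icc 1 k, a j ≤ RieszMean a Λ := by
    have h1 : ∑ j ∈ Finset.range k, (Λ - a (j + 1))
        ≤ ∑ j ∈ Finset.range k, max (Λ - a (j + 1)) 0 :=
      Finset.sum_le_sum fun j _ => le_max_left _ _
    have h2 : ∑ j ∈ Finset.range k, max (Λ - a (j + 1)) 0 ≤ RieszMean a Λ :=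
      Summable.sum_le_tsum _ (fun j _ => le_max_right _ _) (riesz_summable a hatend Λ)
    calc k * Λ - ∑ j ∈ Finset.Icc 1 k, a j
        = ∑ j ∈ Finset.range k, (Λ - a (j + 1)) := by
          rw [Finset.sum_sub_distrib, Finset.sum_const, Finset.card_range, icc_sum,
            nsmul_eq_mul]
      _ ≤ RieszMean a Λ := h1.trans h2
  have key : ∑ j ∈ Finset.Icc 1 k, b j ≤ ∑ j ∈ Finset.Icc 1 k, a j := by
    have := (haR.trans (hR Λ hΛpos)).trans_eq hbR
    linarith
  unfold CesaroAvg
  have hkpos : (0 : ℝ) < k := by exact_mod_cast hk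
  gcongr
end

section
/- Let (a_j)_{j≥1} and (b_j)_{j≥1} be two nondecreasing sequences of positive real numbers tending to infinity, with Riesz means R_a(Λ) := Σ_{j≥1} (Λ − a_j)_+ and R_b(Λ) := Σ_{j≥1} (Λ − b_j)_+. Suppose R_a(Λ) ≤ R_b(Λ) for every Λ > 0, and in addition R_a(b_k) < R_b(b_k) for some integer k ≥ 1. Then the strict inequality (1/k) Σ_{j=1}^k a_j > (1/k) Σ_{j=1}^k b_j holds. -/
open scoped BigOperators

/-- Strict Cesàro–Pólya inequality: strict ordering of Riesz means at the
maximizing energy `Λ = b_k` forces strict ordering of Cesàro averages. -/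
theorem cesaro_polya_strict (a b : ℕ → ℝ)
    (hapos : ∀ j, 0 < a j) (hamono : Monotone a)
    (hatend : Filter.Tendsto a Filter.atTop Filter.atTop)
    (hbpos : ∀ j, 0 < b j) (hbmono : Monotone b)
    (hbtend : Filter.Tendsto b Filter.atTop Filter.atTop)
    (hR : ∀ Λ : ℝ, 0 < Λ → RieszMean a Λ ≤ RieszMean b Λ)
    (k : ℕ) (hk : 1 ≤ k)
    (hstrict : RieszMean a (b k) < RieszMean b (b k)) :
    CesaroAvg b k < CesaroAvg a k := by
  -- Abbreviations
  set Λ := b k with hΛ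
  -- summability of the Riesz mean for a: finitely many nonzero terms
  obtain ⟨N, hN⟩ := (Filter.tendsto_atTop.mp hatend (Λ + 1)).exists_forall_of_atTop
  have hsumm : Summable (fun j : ℕ => max (Λ - a (j + 1)) 0) := by
    apply summable_of_ne_finset_zero (s := Finset.range N)
    intro j hj
    simp only [Finset.mem_range, not_lt] at hj
    have : Λ + 1 ≤ a (j + 1) := hN (j + 1) (le_trans hj (Nat.le_succ j))
    have : Λ - a (j + 1) ≤ 0 := by linarith
    simp [max_eq_right this]
  -- R_b(Λ) = k·Λ − Σ_{j=1}^k b_j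
  have hRb : RieszMean b Λ = ∑ j ∈ Finset.range k, (Λ - b (j + 1)) := by
    rw [RieszMean, tsum_eq_sum (s := Finset.range k)]
    · apply Finset.sum_congr rfl
      intro j hj
      have hjk : j + 1 ≤ k := Finset.mem_range.mp hj
      have : b (j + 1) ≤ Λ := hbmono hjk
      exact max_eq_left (by linarith)
    · intro j hj
      simp only [Finset.mem_range, not_lt] at hj
      have : Λ ≤ b (j + 1) := hbmono (le_trans hj (Nat.le_succ j))
      exact max_eq_right (by linarith)
  -- R_a(Λ) ≥ Σ_{j=1}^k (Λ − a_j)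
  have hRa : ∑ j ∈ Finset.range k, (Λ - a (j + 1)) ≤ RieszMean a Λ := by
    calc ∑ j ∈ Finset.range k, (Λ - a (j + 1))
        ≤ ∑ j ∈ Finset.range k, max (Λ - a (j + 1)) 0 :=
          Finset.sum_le_sum fun j _ => le_max_left _ _
      _ ≤ RieszMean a Λ :=
          Summable.sum_le_tsum _ (fun j _ => le_max_right _ _) hsumm
  have hkey : ∑ j ∈ Finset.range k, b (j + 1) < ∑ j ∈ Finset.range k, a (j + 1) := by
    have := lt_of_le_of_lt hRa hstrict
    rw [hRb] at this
    simp only [Finset.sum_sub_distrib] at this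
    linarith
  -- rewrite as Icc sums
  have hicc : ∀ f : ℕ → ℝ, ∑ j ∈ Finset.Icc 1 k, f j = ∑ j ∈ Finset.range k, f (j + 1) := by
    intro f
    rw [← Finset.Ico_add_one_right_eq_Icc, Finset.sum_Ico_eq_sum_range]
    simp [add_comm]
  have hkpos : (0 : ℝ) < k := by exact_mod_cast hk
  rw [CesaroAvg, CesaroAvg, div_lt_div_iff_of_pos_right hkpos, hicc, hicc]
  exact hkey
end
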